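/- Let A be a C*-algebra, h ∈ A with h ≥ 0 and ‖h‖ = 1, and b ∈ A with b ≥ 0 obtained as b = f(hₙ) where ‖h − hₙ‖ < ε < 1, ‖hₙ‖ = 1, and f : [0,1] → [0,1] is continuous monotone increasing with f(1−ε) = 0, f(1) = 1. If x ∈ A and q is a projection with ‖x* b x − q‖ < ε, then ‖x* b^{1/2} h b^{1/2} x − q‖ < ε(3 + 2ε); consequently, for ε small enough there is a projection in the hereditary subalgebra generated by h that is equivalent to q. -/

import Mathlib

lemma my_commute_cfc {A : Type*} [CStarAlgebra A] {a : A} (b : A) (f : ℝ → ℝ)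
    (ha : IsSelfAdjoint a) (hab : Commute b a) : Commute b (cfc f a) := by
  by_cases hf : ContinuousOn f (spectrum ℝ a)
  · rw [cfc_apply f a ha hf]
    set φ : C(spectrum ℝ a, ℝ) →⋆ₐ[ℝ] A := cfcHom (R := ℝ) ha with hφ
    have hφc : Continuous φ := (cfcHom_isClosedEmbedding (R := ℝ) ha).continuous
    set S : Subalgebra ℝ A := Subalgebra.centralizer ℝ {b} with hS
    have hSmem : ∀ x : A, x ∈ S ↔ b * x = x * b := by
      intro x
      rw [hS, Subalgebra.mem_centralizer_iff]
      constructor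
      · intro hx; exact (hx b rfl)
      · rintro hx y rfl; exact hx
    have hSclosed : IsClosed (S : Set A) := by
      have : (S : Set A) = {x | b * x = x * b} := by ext x; exact hSmem x
      rw [this]
      exact isClosed_eq (continuous_const.mul continuous_id) (continuous_id.mul continuous_const)
    set T : Subalgebra ℝ C(spectrum ℝ a, ℝ) := S.comap φ.toAlgHom with hT
    have hTmem : ∀ g, g ∈ T ↔ φ g ∈ S := fun g => Iff.rfl
    have hT_closed : IsClosed (T : Set C(spectrum ℝ a, ℝ)) := hSclosed.preimage hφc
    have hX : (Polynomial.toContinuousMapOnAlgHom (spectrum ℝ a)) Polynomial.X ∈ T := by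
      rw [hTmem, hSmem]
      have hid : (Polynomial.toContinuousMapOnAlgHom (spectrum ℝ a)) Polynomial.X
          = ContinuousMap.restrict (spectrum ℝ a) (ContinuousMap.id ℝ) := by
        ext x; simp [Polynomial.toContinuousMapOnAlgHom]
      rw [hid, hφ, cfcHom_id ha]
      exact hab
    have hPoly : polynomialFunctions (spectrum ℝ a) ≤ T := by
      intro p hp
      obtain ⟨q, -, rfl⟩ := Subalgebra.mem_map.mp hp
      have hq : q ∈ Algebra.adjoin ℝ ({Polynomial.X} : Set (Polynomial ℝ)) := by
        rw [Polynomial.adjoin_X]; trivial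
      exact Algebra.adjoin_le
        (S := T.comap (Polynomial.toContinuousMapOnAlgHom (spectrum ℝ a)))
        (by rintro _ rfl; exact hX) hq
    have hdense := polynomialFunctions.topologicalClosure (spectrum ℝ a)
    have htop : (⊤ : Subalgebra ℝ C(spectrum ℝ a, ℝ)) ≤ T := by
      rw [← hdense]
      exact Subalgebra.topologicalClosure_minimal hPoly hT_closed
    exact (hSmem _).mp (htop (show _ ∈ (⊤ : Subalgebra ℝ C(spectrum ℝ a, ℝ)) from trivial))
  · rw [cfc_apply_of_not_continuousOn a hf]
    exact Commute.zero_right b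

section MyAux

variable {A : Type*} [CStarAlgebra A] [PartialOrder A] [StarOrderedRing A]


variable {A : Type*} [CStarAlgebra A] [PartialOrder A] [StarOrderedRing A]

lemma my_sqrt_eq_real_cfc (a : A) (ha : 0 ≤ a) : CFC.sqrt a = cfc Real.sqrt a := by
  rw [CFC.sqrt_eq_cfc, cfc_nnreal_eq_real NNReal.sqrt a ha]
  refine cfc_congr fun x hx => ?_
  rw [Real.sqrt]

lemma my_sqrt_conj_mem (h : A) (hh : 0 ≤ h) (y : A) :
    CFC.sqrt h * y * CFC.sqrt h ∈ closure {z : A | ∃ w : A, z = h * w * h} := by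
  have hsa : IsSelfAdjoint h := .of_nonneg hh
  have hspec : ∀ t ∈ spectrum ℝ h, 0 ≤ t := spectrum_nonneg_of_nonneg hh
  have hmcont : ∀ n : ℕ, ContinuousOn (fun t : ℝ => Real.sqrt t / (t + 1/(n+1)))
      (spectrum ℝ h) := by
    intro n
    apply ContinuousOn.div Real.continuous_sqrt.continuousOn (by fun_prop)
    intro t ht
    have h1 := hspec t ht
    positivity
  have hckey : ∀ n : ℕ, cfc (fun t : ℝ => t * (Real.sqrt t / (t + 1/(n+1)))) h
      = h * cfc (fun t : ℝ => Real.sqrt t / (t + 1/(n+1))) h := by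
    intro n
    rw [cfc_mul (fun t : ℝ => t) _ h (by fun_prop) (hmcont n), cfc_id' ℝ h hsa]
  have hckey2 : ∀ n : ℕ, cfc (fun t : ℝ => t * (Real.sqrt t / (t + 1/(n+1)))) h
      = cfc (fun t : ℝ => Real.sqrt t / (t + 1/(n+1))) h * h := by
    intro n
    have he : (fun t : ℝ => t * (Real.sqrt t / (t + 1/(n+1))))
        = (fun t : ℝ => (Real.sqrt t / (t + 1/(n+1))) * t) := by ext t; ring
    rw [he, cfc_mul _ (fun t : ℝ => t) h (hmcont n) (by fun_prop), cfc_id' ℝ h hsa]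
  have hmem : ∀ n : ℕ, (cfc (fun t : ℝ => t * (Real.sqrt t / (t + 1/(n+1)))) h) * y *
      (cfc (fun t : ℝ => t * (Real.sqrt t / (t + 1/(n+1)))) h) ∈
      {z : A | ∃ w : A, z = h * w * h} := by
    intro n
    refine ⟨cfc (fun t : ℝ => Real.sqrt t / (t + 1/(n+1))) h * y *
      (cfc (fun t : ℝ => Real.sqrt t / (t + 1/(n+1))) h), ?_⟩
    nth_rewrite 2 [hckey2 n]
    rw [hckey n]
    simp only [mul_assoc]
  have hbound : ∀ n : ℕ, ‖cfc (fun t : ℝ => t * (Real.sqrt t / (t + 1/(n+1)))) h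
      - cfc Real.sqrt h‖ ≤ Real.sqrt (1/(n+1)) := by
    intro n
    have hccont : ContinuousOn (fun t : ℝ => t * (Real.sqrt t / (t + 1/(n+1))))
        (spectrum ℝ h) := ContinuousOn.mul (by fun_prop) (hmcont n)
    rw [← cfc_sub _ _ h hccont Real.continuous_sqrt.continuousOn]
    apply norm_cfc_le (Real.sqrt_nonneg _)
    intro t ht
    have ht0 := hspec t ht
    have hδ : 0 < 1/((n:ℝ)+1) := by positivity
    set δ : ℝ := 1/((n:ℝ)+1) with hδdef
    have hne : t + δ ≠ 0 := by positivity
    have key : t * (Real.sqrt t / (t + δ)) - Real.sqrt t = -(Real.sqrt t * δ / (t + δ)) := by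
      field_simp
      ring
    rw [Real.norm_eq_abs, key, abs_neg, abs_of_nonneg (by positivity)]
    rw [div_le_iff₀ (by positivity)]
    nlinarith [mul_nonneg (Real.sqrt_nonneg δ) (sq_nonneg (Real.sqrt t - Real.sqrt δ)),
      Real.sq_sqrt ht0, Real.sq_sqrt hδ.le, Real.sqrt_nonneg t, Real.sqrt_nonneg δ]
  have hδ0 : Filter.Tendsto (fun n : ℕ => Real.sqrt (1/(n+1))) Filter.atTop (nhds 0) := by
    have h1 : Filter.Tendsto (fun n : ℕ => 1/((n:ℝ)+1)) Filter.atTop (nhds 0) :=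
      tendsto_one_div_add_atTop_nhds_zero_nat
    have h2 : Filter.Tendsto Real.sqrt (nhds 0) (nhds (Real.sqrt 0)) :=
      Real.continuous_sqrt.tendsto 0
    rw [Real.sqrt_zero] at h2
    exact h2.comp h1
  have hclim : Filter.Tendsto (fun n : ℕ => cfc (fun t : ℝ => t * (Real.sqrt t / (t + 1/(n+1)))) h)
      Filter.atTop (nhds (CFC.sqrt h)) := by
    rw [my_sqrt_eq_real_cfc h hh]
    rw [tendsto_iff_norm_sub_tendsto_zero]
    exact squeeze_zero (fun n => norm_nonneg _) hbound hδ0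
  have hcont2 : Filter.Tendsto (fun n : ℕ =>
      (cfc (fun t : ℝ => t * (Real.sqrt t / (t + 1/(n+1)))) h) * y *
      (cfc (fun t : ℝ => t * (Real.sqrt t / (t + 1/(n+1)))) h)) Filter.atTop
      (nhds (CFC.sqrt h * y * CFC.sqrt h)) :=
    (hclim.mul tendsto_const_nhds).mul hclim
  exact mem_closure_of_tendsto hcont2 (Filter.Eventually.of_forall hmem)

end MyAux

/-- from the proof of Claim 3.6: with `h, hₙ ≥ 0` of norm one,
`‖h − hₙ‖ < ε < 1`, and `b = f(hₙ)` for `f : [0,1] → [0,1]` continuous monotone with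
`f(1−ε) = 0`, `f(1) = 1`: if `q` is a projection with `‖x* b x − q‖ < ε` then
`‖x* b^{1/2} h b^{1/2} x − q‖ < ε(3+2ε)`; and if `ε` is small enough (so that
`ε(3+2ε) < 1`) then there is a projection in the hereditary subalgebra generated by
`h` which is Murray–von Neumann equivalent to `q`. -/
theorem projection_in_hereditary_subalgebra
    {A : Type*} [CStarAlgebra A] [PartialOrder A] [StarOrderedRing A]
    (ε : ℝ) (hε0 : 0 < ε) (hε1 : ε < 1)
    (h hn : A) (hh_pos : 0 ≤ h) (hh_norm : ‖h‖ = 1)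
    (hhn_pos : 0 ≤ hn) (hhn_norm : ‖hn‖ = 1)
    (hclose : ‖h - hn‖ < ε)
    (f : ℝ → ℝ) (hf_cont : Continuous f)
    (hf_mono : MonotoneOn f (Set.Icc 0 1))
    (hf_maps : Set.MapsTo f (Set.Icc 0 1) (Set.Icc 0 1))
    (hf0 : f (1 - ε) = 0) (hf1 : f 1 = 1)
    (b : A) (hb : b = cfc f hn) :
    (∀ x q : A, IsIdempotentElem q → star q = q → ‖star x * b * x - q‖ < ε →
        ‖star x * (CFC.sqrt b * h * CFC.sqrt b) * x - q‖ < ε * (3 + 2 * ε)) ∧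
    (ε * (3 + 2 * ε) < 1 →
      ∀ x q : A, IsIdempotentElem q → star q = q → ‖star x * b * x - q‖ < ε →
        ∃ e s : A, IsIdempotentElem e ∧ star e = e ∧
          e ∈ closure {z : A | ∃ y : A, z = h * y * h} ∧
          star s * s = e ∧ s * star s = q) := by
  haveI : Nontrivial A := by
    by_contra hcon
    rw [not_nontrivial_iff_subsingleton] at hcon
    have h0 : h = 0 := Subsingleton.elim _ _
    rw [h0, norm_zero] at hh_norm
    norm_num at hh_norm
  have hσ : ∀ t ∈ spectrum ℝ hn, t ∈ Set.Icc (0:ℝ) 1 := by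
    intro t ht
    refine ⟨spectrum_nonneg_of_nonneg hhn_pos ht, ?_⟩
    have h1 := spectrum.norm_le_norm_of_mem ht
    rw [hhn_norm, Real.norm_eq_abs] at h1
    exact (abs_le.mp h1).2
  have hf_nonneg : ∀ t ∈ spectrum ℝ hn, 0 ≤ f t := fun t ht => (hf_maps (hσ t ht)).1
  have hb_pos : 0 ≤ b := hb ▸ cfc_nonneg hf_nonneg
  set s := CFC.sqrt b with hs
  have hs_pos : 0 ≤ s := CFC.sqrt_nonneg b
  have hs_sa : IsSelfAdjoint s := .of_nonneg hs_pos
  have hss : s * s = b := CFC.sqrt_mul_sqrt_self b hb_pos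
  have hn_sa : IsSelfAdjoint hn := .of_nonneg hhn_pos
  have hfcont : ContinuousOn f (spectrum ℝ hn) := hf_cont.continuousOn
  have hfz : ∀ t ∈ spectrum ℝ hn, t ≤ 1 - ε → f t = 0 := by
    intro t ht hle
    have h1 : f t ≤ f (1 - ε) :=
      hf_mono (hσ t ht) ⟨by linarith, by linarith⟩ hle
    have h2 := hf_nonneg t ht
    rw [hf0] at h1; linarith
  have c1 : ContinuousOn (Real.sqrt ∘ f) (spectrum ℝ hn) :=
    (Real.continuous_sqrt.comp hf_cont).continuousOn
  have hs_eq : s = cfc (Real.sqrt ∘ f) hn := by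
    rw [hs, my_sqrt_eq_real_cfc b hb_pos, hb,
      ← cfc_comp' Real.sqrt f hn Real.continuous_sqrt.continuousOn hfcont]
    rfl
  have hshns : s * hn * s = cfc (fun t : ℝ => t * f t) hn := by
    calc s * hn * s = cfc (Real.sqrt ∘ f) hn * cfc (fun t : ℝ => t) hn * cfc (Real.sqrt ∘ f) hn := by
          rw [cfc_id' ℝ hn hn_sa, ← hs_eq]
      _ = cfc (fun t : ℝ => ((Real.sqrt ∘ f) t * t) * (Real.sqrt ∘ f) t) hn := by
          rw [cfc_mul (fun t : ℝ => (Real.sqrt ∘ f) t * t) (Real.sqrt ∘ f) hn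
            (c1.mul (by fun_prop)) c1,
            cfc_mul (Real.sqrt ∘ f) (fun t : ℝ => t) hn c1 (by fun_prop)]
      _ = cfc (fun t : ℝ => t * f t) hn := by
          refine cfc_congr fun t ht => ?_
          have h2 := hf_nonneg t ht
          simp only [Function.comp_apply]
          linear_combination t * Real.mul_self_sqrt h2
  have hle1 : (1 - ε) • b ≤ s * hn * s := by
    rw [hshns, hb, ← cfc_smul (1 - ε) f hn hfcont]
    refine cfc_mono fun t ht => ?_
    rcases le_or_gt t (1 - ε) with hc | hc
    · rw [hfz t ht hc]; simp
    · have h2 := hf_nonneg t ht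
      have h3 := (hσ t ht).2
      simp only [smul_eq_mul]
      nlinarith
  have hle2 : s * hn * s ≤ b := by
    rw [hshns, hb]
    refine cfc_mono fun t ht => ?_
    have h2 := hf_nonneg t ht
    have h3 := (hσ t ht).2
    nlinarith
  have hq_norm : ∀ q : A, IsIdempotentElem q → star q = q → ‖q‖ ≤ 1 := by
    intro q hq hqs
    rcases eq_or_ne q 0 with rfl | hq0
    · simp
    · have h1 : ‖q‖ * ‖q‖ = ‖q‖ := by
        calc ‖q‖ * ‖q‖ = ‖star q * q‖ := (CStarRing.norm_star_mul_self).symm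
          _ = ‖q * q‖ := by rw [hqs]
          _ = ‖q‖ := by rw [hq.eq]
      have h2 : 0 < ‖q‖ := norm_pos_iff.mpr hq0
      nlinarith
  have main : ∀ x q : A, IsIdempotentElem q → star q = q → ‖star x * b * x - q‖ < ε →
      ‖star x * (s * h * s) * x - q‖ < ε * (3 + 2 * ε) := by
    intro x q hq hqs hxq
    have hnq := hq_norm q hq hqs
    have hbx_norm : ‖star x * b * x‖ < 1 + ε := by
      calc ‖star x * b * x‖ = ‖(star x * b * x - q) + q‖ := by rw [sub_add_cancel]
        _ ≤ ‖star x * b * x - q‖ + ‖q‖ := norm_add_le _ _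
        _ < 1 + ε := by linarith
    have hc1 := star_left_conjugate_le_conjugate hle1 x
    have hc2 := star_left_conjugate_le_conjugate hle2 x
    have hsmul : star x * ((1 - ε) • b) * x = (1 - ε) • (star x * b * x) := by
      rw [mul_smul_comm, smul_mul_assoc]
    rw [hsmul] at hc1
    have hT2a : 0 ≤ star x * b * x - star x * (s * hn * s) * x := sub_nonneg.mpr hc2
    have hT2b : star x * b * x - star x * (s * hn * s) * x ≤ ε • (star x * b * x) := by
      have h4 := sub_le_sub_left hc1 (star x * b * x)
      refine h4.trans ?_
      have h5 : star x * b * x - (1 - ε) • (star x * b * x) = ε • (star x * b * x) := by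
        rw [sub_smul, one_smul]; abel
      rw [h5]
    have hT2 : ‖star x * b * x - star x * (s * hn * s) * x‖ ≤ ε * ‖star x * b * x‖ := by
      have h6 := CStarAlgebra.norm_le_norm_of_nonneg_of_le hT2a hT2b
      rwa [norm_smul, Real.norm_eq_abs, abs_of_pos hε0] at h6
    have hT1 : ‖star x * (s * h * s) * x - star x * (s * hn * s) * x‖
        ≤ ε * ‖star x * b * x‖ := by
      have e1 : star x * (s * h * s) * x - star x * (s * hn * s) * x
          = star (s * x) * (h - hn) * (s * x) := by
        rw [star_mul, hs_sa.star_eq]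
        simp only [mul_sub, sub_mul, mul_assoc]
      have e2 : star (s * x) * (s * x) = star x * b * x := by
        rw [star_mul, hs_sa.star_eq, ← hss]
        simp only [mul_assoc]
      calc ‖star x * (s * h * s) * x - star x * (s * hn * s) * x‖
          = ‖star (s * x) * (h - hn) * (s * x)‖ := by rw [e1]
        _ ≤ ‖star (s * x) * (h - hn)‖ * ‖s * x‖ := norm_mul_le _ _
        _ ≤ ‖star (s * x)‖ * ‖h - hn‖ * ‖s * x‖ :=
            mul_le_mul_of_nonneg_right (norm_mul_le _ _) (norm_nonneg _)
        _ = ‖h - hn‖ * (‖s * x‖ * ‖s * x‖) := by rw [norm_star]; ring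
        _ = ‖h - hn‖ * ‖star x * b * x‖ := by
            rw [← CStarRing.norm_star_mul_self, e2]
        _ ≤ ε * ‖star x * b * x‖ :=
            mul_le_mul_of_nonneg_right hclose.le (norm_nonneg _)
    have hεbx : ε * ‖star x * b * x‖ < ε * (1 + ε) :=
      mul_lt_mul_of_pos_left hbx_norm hε0
    have tri : ‖star x * (s * h * s) * x - q‖ ≤
        ‖star x * (s * h * s) * x - star x * (s * hn * s) * x‖ +
        ‖star x * b * x - star x * (s * hn * s) * x‖ + ‖star x * b * x - q‖ := by
      have heq : star x * (s * h * s) * x - q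
          = ((star x * (s * h * s) * x - star x * (s * hn * s) * x)
            + -(star x * b * x - star x * (s * hn * s) * x)) + (star x * b * x - q) := by
        abel
      rw [heq]
      have t1 := norm_add_le ((star x * (s * h * s) * x - star x * (s * hn * s) * x)
        + -(star x * b * x - star x * (s * hn * s) * x)) (star x * b * x - q)
      have t2 := norm_add_le (star x * (s * h * s) * x - star x * (s * hn * s) * x)
        (-(star x * b * x - star x * (s * hn * s) * x))
      rw [norm_neg] at t2
      linarith
    nlinarith [tri, hT1, hT2, hxq, hεbx]
  refine ⟨main, ?_⟩
  intro hsmall x q hq hqs hxq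
  have hγlt := main x q hq hqs hxq
  have hγ1 : ‖star x * (s * h * s) * x - q‖ < 1 := lt_trans hγlt hsmall
  set a : A := star x * (s * h * s) * x with ha_def
  set γ : ℝ := ‖a - q‖ with hγdef
  have hγ0 : 0 ≤ γ := norm_nonneg _
  have ha_pos : 0 ≤ a := by
    have h1 : 0 ≤ s * h * s := by
      have h2 := star_left_conjugate_nonneg hh_pos s
      rwa [hs_sa.star_eq] at h2
    exact star_left_conjugate_nonneg h1 x
  have ha_sa : IsSelfAdjoint a := .of_nonneg ha_pos
  have hq_sa : IsSelfAdjoint q := hqs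
  have hnq := hq_norm q hq hqs
  set d : A := q * a * q with hd_def
  have hd_pos : 0 ≤ d := by
    have h1 := star_left_conjugate_nonneg ha_pos q
    rwa [hqs] at h1
  have hqd : q * d = d := by rw [hd_def, ← mul_assoc, ← mul_assoc, hq.eq]
  have hdq2 : d * q = d := by rw [hd_def, mul_assoc, hq.eq]
  have hqqq : q * q * q = q := by rw [hq.eq, hq.eq]
  have hdq_eq : d - q = q * (a - q) * q := by
    rw [mul_sub, sub_mul, hqqq, hd_def]
  have hdq_norm : ‖d - q‖ ≤ γ := by
    rw [hdq_eq]
    calc ‖q * (a - q) * q‖ ≤ ‖q * (a - q)‖ * ‖q‖ := norm_mul_le _ _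
      _ ≤ ‖q‖ * ‖a - q‖ * ‖q‖ :=
          mul_le_mul_of_nonneg_right (norm_mul_le _ _) (norm_nonneg _)
      _ ≤ 1 * γ * 1 := by gcongr <;> exact hnq
      _ = γ := by ring
  have hlow : (1 - γ) • q ≤ d := by
    have h1 : -(algebraMap ℝ A γ) ≤ a - q := by
      have h2 := IsSelfAdjoint.neg_algebraMap_norm_le_self (a := a - q) (ha_sa.sub hq_sa)
      rwa [← hγdef] at h2
    have h2 := star_left_conjugate_le_conjugate h1 q
    rw [hqs, ← hdq_eq] at h2
    have h3 : q * -(algebraMap ℝ A γ) * q = -(γ • q) := by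
      rw [Algebra.algebraMap_eq_smul_one]
      simp only [mul_neg, neg_mul, mul_smul_comm, smul_mul_assoc, mul_one, one_mul]
      rw [hq.eq]
    rw [h3] at h2
    have h4 : q - γ • q ≤ d := by
      calc q - γ • q = -(γ • q) + q := by abel
        _ ≤ d - q + q := add_le_add_left h2 q
        _ = d := by abel
    calc (1 - γ) • q = q - γ • q := by rw [sub_smul, one_smul]
      _ ≤ d := h4
  set u : A := 1 + (d - q) with hu_def
  have hqu : q * u = d := by
    rw [hu_def, mul_add, mul_one, mul_sub, hqd, hq.eq]
    abel
  have huq : u * q = d := by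
    rw [hu_def, add_mul, one_mul, sub_mul, hdq2, hq.eq]
    abel
  have hcomm : Commute q u := by
    show q * u = u * q
    rw [hqu, huq]
  have hu_sa : IsSelfAdjoint u := by
    rw [hu_def]
    have h1sa : IsSelfAdjoint (1 : A) := by
      rw [IsSelfAdjoint, star_one]
    exact h1sa.add ((IsSelfAdjoint.of_nonneg hd_pos).sub hq_sa)
  have h1q_pos : 0 ≤ (1 : A) - q := by
    have h2 : ((1:A) - q) * ((1:A) - q) = 1 - q := by
      simp only [mul_sub, sub_mul, mul_one, one_mul, hq.eq]
      abel
    calc (0:A) ≤ star ((1:A) - q) * ((1:A) - q) := star_mul_self_nonneg _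
      _ = (1:A) - q := by rw [star_sub, star_one, hqs, h2]
  have hu_lower : (1 - γ) • (1:A) ≤ u := by
    have h5 : (1 - γ) • ((1:A) - q) ≤ (1:A) - q := by
      have h6 : (1:A) - q - (1 - γ) • ((1:A) - q) = γ • ((1:A) - q) := by
        rw [sub_smul, one_smul]; abel
      rw [← sub_nonneg, h6]
      exact smul_nonneg hγ0 h1q_pos
    calc (1 - γ) • (1:A) = (1 - γ) • q + (1 - γ) • ((1:A) - q) := by
          rw [← smul_add]; congr 1; abel
      _ ≤ d + ((1:A) - q) := add_le_add hlow h5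
      _ = u := by rw [hu_def]; abel
  have hspec_u : ∀ μ ∈ spectrum ℝ u, 1 - γ ≤ μ := by
    intro μ hμ
    have he : u = algebraMap ℝ A (1:ℝ) + (d - q) := by rw [hu_def, map_one]
    rw [he, ← spectrum.singleton_add_eq] at hμ
    obtain ⟨r, hr, ν, hν, rfl⟩ := Set.mem_add.mp hμ
    rw [Set.mem_singleton_iff] at hr
    subst hr
    have h7 : ‖ν‖ ≤ ‖d - q‖ := spectrum.norm_le_norm_of_mem hν
    rw [Real.norm_eq_abs] at h7
    have h8 := (abs_le.mp h7).1
    have := hdq_norm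
    linarith
  have hγ1' : (0:ℝ) < 1 - γ := by
    rw [hγdef, ha_def]
    linarith
  have hvcont : ContinuousOn (fun t : ℝ => (Real.sqrt t)⁻¹) (spectrum ℝ u) := by
    apply ContinuousOn.inv₀ Real.continuous_sqrt.continuousOn
    intro t ht
    have h7 : 0 < t := lt_of_lt_of_le hγ1' (hspec_u t ht)
    exact ne_of_gt (Real.sqrt_pos.mpr h7)
  set v : A := cfc (fun t : ℝ => (Real.sqrt t)⁻¹) u with hv_def
  have hv_pos : 0 ≤ v := cfc_nonneg fun t ht => by positivity
  have hv_sa : IsSelfAdjoint v := .of_nonneg hv_pos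
  have hvuv : v * u * v = 1 := by
    rw [hv_def]
    nth_rewrite 2 [← cfc_id' ℝ u hu_sa]
    rw [← cfc_mul _ _ u hvcont (by fun_prop),
      ← cfc_mul (fun x : ℝ => (Real.sqrt x)⁻¹ * x) _ u (hvcont.mul continuousOn_id) hvcont,
      ← cfc_const_one ℝ u hu_sa]
    refine cfc_congr fun t ht => ?_
    have h7 : 0 < t := lt_of_lt_of_le hγ1' (hspec_u t ht)
    have h8 : Real.sqrt t ≠ 0 := ne_of_gt (Real.sqrt_pos.mpr h7)
    field_simp
    all_goals linarith [Real.mul_self_sqrt h7.le]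
  have hqv : Commute q v := my_commute_cfc q _ hu_sa hcomm
  have hvdv : v * d * v = q := by
    rw [← huq]
    calc v * (u * q) * v = (v * u) * (q * v) := by simp only [mul_assoc]
      _ = (v * u) * (v * q) := by rw [hqv.eq]
      _ = (v * u * v) * q := by simp only [mul_assoc]
      _ = q := by rw [hvuv, one_mul]
  have hsq_pos : 0 ≤ CFC.sqrt h := CFC.sqrt_nonneg h
  have hsq_sa : IsSelfAdjoint (CFC.sqrt h) := .of_nonneg hsq_pos
  have hsq_mul : CFC.sqrt h * CFC.sqrt h = h := CFC.sqrt_mul_sqrt_self h hh_pos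
  set c : A := CFC.sqrt h * (s * x) with hc_def
  have hcc : star c * c = a := by
    rw [ha_def, hc_def, star_mul, hsq_sa.star_eq, star_mul, hs_sa.star_eq]
    have h9 : CFC.sqrt h * (CFC.sqrt h * (s * x)) = h * (s * x) := by
      rw [← mul_assoc, hsq_mul]
    simp only [mul_assoc]
    rw [h9]
  set w : A := c * (q * v) with hw_def
  have hww : star w * w = q := by
    have h9 : star c * (c * (q * v)) = a * (q * v) := by rw [← mul_assoc, hcc]
    have h10 : star w * w = v * (q * (a * (q * v))) := by
      rw [hw_def, star_mul, star_mul, hqs, hv_sa.star_eq]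
      simp only [mul_assoc]
      rw [h9]
    have h11 : v * (q * (a * (q * v))) = v * d * v := by
      rw [hd_def]; simp only [mul_assoc]
    rw [h10, h11, hvdv]
  have hwq : w * q = w := by
    rw [hw_def]
    calc c * (q * v) * q = c * (q * (v * q)) := by simp only [mul_assoc]
      _ = c * (q * (q * v)) := by rw [← hqv.eq]
      _ = c * (q * q * v) := by simp only [mul_assoc]
      _ = c * (q * v) := by rw [hq.eq]
  have he_idem : IsIdempotentElem (w * star w) := by
    show w * star w * (w * star w) = w * star w
    calc w * star w * (w * star w) = w * (star w * w) * star w := by simp only [mul_assoc]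
      _ = w * q * star w := by rw [hww]
      _ = w * star w := by rw [hwq]
  have he_sa : star (w * star w) = w * star w := by rw [star_mul, star_star]
  have he_mem : w * star w ∈ closure {z : A | ∃ y : A, z = h * y * h} := by
    have he2 : w * star w
        = CFC.sqrt h * (s * x * (q * v) * (v * q) * (star x * s)) * CFC.sqrt h := by
      rw [hw_def, hc_def]
      simp only [star_mul, hqs, hv_sa.star_eq, hsq_sa.star_eq, hs_sa.star_eq, mul_assoc]
    rw [he2]
    exact my_sqrt_conj_mem h hh_pos _
  exact ⟨w * star w, star w, he_idem, he_sa, he_mem,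
    by rw [star_star], by rw [star_star]; exact hww⟩
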